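/- Let (X, d) be a cone metric space over a real Banach space E whose cone P is normal with normal constant k, and assume additionally the condition (*): for all p, c ∈ E with c ∈ P, if p ≤ c and −p ≤ c then ‖p‖ ≤ k‖c‖. Let r ∈ E with 0 ≪ r. If (x_n) and (y_n) are two (r/(2k²))-Cauchy sequences in X, then the real-valued data (d(x_n, y_n)) is ‖r‖-Cauchy in norm; that is, for every real ε > 0 there exists m ∈ ℕ such that ‖d(x_i, y_i) − d(x_j, y_j)‖ < ‖r‖ + ε for all i, j ≥ m. -/

import Mathlib

/-- `P` is a cone in the real Banach space `E`: it is closed, nonempty, not reduced to `{0}`,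
closed under nonnegative real combinations, and satisfies `x ∈ P → -x ∈ P → x = 0`. -/
structure IsCone {E : Type*} [NormedAddCommGroup E] [NormedSpace ℝ E] (P : Set E) : Prop where
  closed : IsClosed P
  nonempty : P.Nonempty
  ne_singleton_zero : P ≠ {0}
  comb_mem : ∀ a b : ℝ, 0 ≤ a → 0 ≤ b → ∀ x y : E, x ∈ P → y ∈ P → a • x + b • y ∈ P
  eq_zero_of_mem_of_neg_mem : ∀ x : E, x ∈ P → -x ∈ P → x = 0

/-- `d : X × X → E` is a cone metric on `X` with respect to the cone `P`, where the partial
order on `E` is `x ≤ y ↔ y - x ∈ P`. -/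
structure IsConeMetric {E : Type*} [NormedAddCommGroup E] [NormedSpace ℝ E]
    (P : Set E) {X : Type*} (d : X → X → E) : Prop where
  /-- `0 ≤ d x y`, i.e. `d x y - 0 ∈ P`. -/
  nonneg : ∀ x y : X, d x y ∈ P
  eq_zero_iff : ∀ x y : X, d x y = 0 ↔ x = y
  symm : ∀ x y : X, d x y = d y x
  /-- `d x y ≤ d x z + d z y`, i.e. `(d x z + d z y) - d x y ∈ P`. -/
  triangle : ∀ x y z : X, (d x z + d z y) - d x y ∈ P

/-- The sequence `x` in the cone metric space `(X, d)` is `r`-convergent to `a`: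
for every `ε` with `0 ≪ ε` (i.e. `ε ∈ interior P`) there is `k` such that
`d (x n) a ≪ r + ε` (i.e. `(r + ε) - d (x n) a ∈ interior P`) for all `n ≥ k`. -/
def RConvergent {E : Type*} [NormedAddCommGroup E] [NormedSpace ℝ E] (P : Set E)
    {X : Type*} (d : X → X → E) (r : E) (x : ℕ → X) (a : X) : Prop :=
  ∀ ε : E, ε ∈ interior P → ∃ k : ℕ, ∀ n : ℕ, k ≤ n → (r + ε) - d (x n) a ∈ interior P

/-- The sequence `x` in the cone metric space `(X, d)` is an `r`-Cauchy sequence: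
for every `ε` with `0 ≪ ε` there is `m` such that `d (x i) (x j) ≪ r + ε` for all `i, j ≥ m`. -/
def RCauchy {E : Type*} [NormedAddCommGroup E] [NormedSpace ℝ E] (P : Set E)
    {X : Type*} (d : X → X → E) (r : E) (x : ℕ → X) : Prop :=
  ∀ ε : E, ε ∈ interior P → ∃ m : ℕ, ∀ i j : ℕ, m ≤ i → m ≤ j →
    (r + ε) - d (x i) (x j) ∈ interior P

/-- If `P` is a normal cone with normal constant `k` satisfying condition `(*)`, `0 ≪ r`, and
`(x_n)`, `(y_n)` are `(r/(2k²))`-Cauchy sequences, then `(d (x_n) (y_n))` is `‖r‖`-Cauchy in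
norm: for every real `ε > 0` there is `m` with `‖d (x i) (y i) - d (x j) (y j)‖ < ‖r‖ + ε`
for all `i, j ≥ m`. -/
theorem norm_dist_rCauchy
    {E X : Type*} [NormedAddCommGroup E] [NormedSpace ℝ E] [CompleteSpace E] [Nonempty X]
    (P : Set E) (hP : IsCone P) (d : X → X → E) (hd : IsConeMetric P d)
    (k : ℝ) (hk : 0 < k)
    (hnormal : ∀ u v : E, u ∈ P → v - u ∈ P → ‖u‖ ≤ k * ‖v‖)
    (hstar : ∀ p c : E, c ∈ P → c - p ∈ P → c + p ∈ P → ‖p‖ ≤ k * ‖c‖)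
    (r : E) (hr : r ∈ interior P)
    (x y : ℕ → X)
    (hx : RCauchy P d ((1 / (2 * k ^ 2)) • r) x)
    (hy : RCauchy P d ((1 / (2 * k ^ 2)) • r) y) :
    ∀ ε : ℝ, 0 < ε → ∃ m : ℕ, ∀ i j : ℕ, m ≤ i → m ≤ j →
      ‖d (x i) (y i) - d (x j) (y j)‖ < ‖r‖ + ε := by
  intro ε hε
  have Padd : ∀ u v : E, u ∈ P → v ∈ P → u + v ∈ P := by
    intro u v hu hv
    have := hP.comb_mem 1 1 zero_le_one zero_le_one u v hu hv
    simpa using this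
  set t : ℝ := ε / (2 * k ^ 2 * (‖r‖ + 1)) with ht
  have hrn : (0:ℝ) ≤ ‖r‖ := norm_nonneg r
  have ht0 : 0 < t := by positivity
  -- t • r ∈ interior P
  have hε' : t • r ∈ interior P := by
    have hopen : IsOpen ((t • ·) '' interior P) :=
      (isOpenMap_smul₀ ht0.ne') _ isOpen_interior
    have hsub : (t • ·) '' interior P ⊆ P := by
      rintro _ ⟨a, ha, rfl⟩
      have := hP.comb_mem t 0 ht0.le le_rfl a a (interior_subset ha) (interior_subset ha)
      simpa using this
    exact interior_maximal hsub hopen ⟨r, hr, rfl⟩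
  obtain ⟨m1, h1⟩ := hx (t • r) hε'
  obtain ⟨m2, h2⟩ := hy (t • r) hε'
  refine ⟨max m1 m2, fun i j hi hj => ?_⟩
  have hi1 := le_trans (le_max_left m1 m2) hi
  have hj1 := le_trans (le_max_left m1 m2) hj
  have hi2 := le_trans (le_max_right m1 m2) hi
  have hj2 := le_trans (le_max_right m1 m2) hj
  set p : E := d (x i) (y i) - d (x j) (y j) with hp
  set c : E := d (x i) (x j) + d (y i) (y j) with hc
  have hcP : c ∈ P := Padd _ _ (hd.nonneg _ _) (hd.nonneg _ _)
  have hcmp : c - p ∈ P := by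
    have hA := hd.triangle (x i) (y i) (x j)
    have hB := hd.triangle (x j) (y i) (y j)
    have h := Padd _ _ hA hB
    rw [hd.symm (y j) (y i)] at h
    convert h using 1
    rw [hp, hc]; abel
  have hcpp : c + p ∈ P := by
    have hA := hd.triangle (x j) (y j) (x i)
    have hB := hd.triangle (x i) (y j) (y i)
    have h := Padd _ _ hA hB
    rw [hd.symm (x j) (x i)] at h
    convert h using 1
    rw [hp, hc]; abel
  have hpc : ‖p‖ ≤ k * ‖c‖ := hstar p c hcP hcmp hcpp
  -- bound on c
  set v : E := ((1 / (2 * k ^ 2)) • r + t • r) + ((1 / (2 * k ^ 2)) • r + t • r) with hv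
  have hvc : v - c ∈ P := by
    have hvx : ((1 / (2 * k ^ 2)) • r + t • r) - d (x i) (x j) ∈ P :=
      interior_subset (h1 i j hi1 hj1)
    have hvy : ((1 / (2 * k ^ 2)) • r + t • r) - d (y i) (y j) ∈ P :=
      interior_subset (h2 i j hi2 hj2)
    have h := Padd _ _ hvx hvy
    convert h using 1
    rw [hv, hc]; abel
  have hcv : ‖c‖ ≤ k * ‖v‖ := hnormal c v hcP hvc
  have hveq : v = (1 / k ^ 2 + 2 * t) • r := by
    rw [hv, ← add_smul, ← add_smul]; congr 1; field_simp; ring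
  have hvnorm : ‖v‖ = (1 / k ^ 2 + 2 * t) * ‖r‖ := by
    rw [hveq, norm_smul, Real.norm_eq_abs, abs_of_pos (by positivity)]
  have key : ‖p‖ ≤ ‖r‖ + 2 * k ^ 2 * t * ‖r‖ := by
    calc ‖p‖ ≤ k * ‖c‖ := hpc
    _ ≤ k * (k * ‖v‖) := by nlinarith
    _ = ‖r‖ + 2 * k ^ 2 * t * ‖r‖ := by
        rw [hvnorm]; field_simp
  have hlt : 2 * k ^ 2 * t * ‖r‖ < ε := by
    have heq : 2 * k ^ 2 * t * (‖r‖ + 1) = ε := by rw [ht]; field_simp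
    nlinarith [mul_pos (mul_pos (by positivity : (0:ℝ) < 2 * k ^ 2) ht0) (by linarith : (0:ℝ) < 1)]
  linarith
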